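/- Let {|ψ¹_j⟩}_{j=1,…,N} be unit vectors spanning ℂ^D with Gram matrix Γ₁, and let {|x_j⟩}_{j=1,…,N} be an orthonormal set in ℂ^D. If there exists a probabilistic transformation taking |ψ¹_j⟩ to |x_j⟩ with probability vector p = (p_j) (i.e., operators {A_k} with Σ_k A_k†A_k ≤ 1, A_k|ψ¹_j⟩ = c_{kj}|x_j⟩, and p_j = ⟨ψ¹_j|(Σ_k A_k†A_k)|ψ¹_j⟩), then the matrix Γ₁ − Δ(p) is positive semidefinite, where Δ(p) is the N×N diagonal matrix with entries Δ(p)_{j'j} = p_j δ_{j'j}. (This is the Duan–Guo condition for unambiguous state discrimination.) -/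

import Mathlib

open Matrix BigOperators
open scoped ComplexOrder

private lemma dotProduct_sum' {n M : ℕ} (v : Fin n → ℂ) (f : Fin M → Fin n → ℂ) :
    v ⬝ᵥ (∑ k, f k) = ∑ k, v ⬝ᵥ f k := by
  simp only [dotProduct, Finset.sum_apply, Finset.mul_sum]
  exact Finset.sum_comm

private lemma sum_dotProduct' {n M : ℕ} (f : Fin M → Fin n → ℂ) (v : Fin n → ℂ) :
    (∑ k, f k) ⬝ᵥ v = ∑ k, f k ⬝ᵥ v := by
  simp only [dotProduct, Finset.sum_apply, Finset.sum_mul]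
  exact Finset.sum_comm

private lemma sum_mulVec' {M D : ℕ} (B : Fin M → Matrix (Fin D) (Fin D) ℂ)
    (v : Fin D → ℂ) : (∑ k, B k) *ᵥ v = ∑ k, (B k) *ᵥ v := by
  ext i
  simp only [Matrix.mulVec, dotProduct, Finset.sum_apply, Matrix.sum_apply, Finset.sum_mul]
  rw [Finset.sum_comm]

private lemma quad_eq {D : ℕ} (B : Matrix (Fin D) (Fin D) ℂ) (w' w : Fin D → ℂ) :
    star w' ⬝ᵥ ((Bᴴ * B) *ᵥ w) = star (B *ᵥ w') ⬝ᵥ (B *ᵥ w) := by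
  rw [← Matrix.mulVec_mulVec, Matrix.dotProduct_mulVec, ← Matrix.star_mulVec]

private lemma quad_sum {M D : ℕ} (A : Fin M → Matrix (Fin D) (Fin D) ℂ) (w' w : Fin D → ℂ) :
    star w' ⬝ᵥ ((∑ k, (A k)ᴴ * A k) *ᵥ w) = ∑ k, star ((A k) *ᵥ w') ⬝ᵥ ((A k) *ᵥ w) := by
  rw [sum_mulVec', dotProduct_sum']
  exact Finset.sum_congr rfl fun k _ => quad_eq (A k) w' w

private lemma expand_bilin {D N : ℕ} (ψ1 : Fin N → (Fin D → ℂ)) (v : Fin N → ℂ)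
    (B : Matrix (Fin D) (Fin D) ℂ) :
    star (∑ j, v j • ψ1 j) ⬝ᵥ (B *ᵥ ∑ j, v j • ψ1 j)
      = ∑ j', ∑ j, star (v j') * v j * (star (ψ1 j') ⬝ᵥ (B *ᵥ ψ1 j)) := by
  have h1 : B *ᵥ (∑ j, v j • ψ1 j) = ∑ j, v j • (B *ᵥ ψ1 j) := by
    simp only [← Matrix.mulVecLin_apply, map_sum, LinearMap.map_smul]
  have h2 : star (∑ j, v j • ψ1 j) = ∑ j', star (v j') • star (ψ1 j') := by
    rw [star_sum]
    exact Finset.sum_congr rfl fun j _ => star_smul _ _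
  rw [h1, h2, sum_dotProduct']
  refine Finset.sum_congr rfl fun j' _ => ?_
  rw [smul_dotProduct, dotProduct_sum', smul_eq_mul, Finset.mul_sum]
  refine Finset.sum_congr rfl fun j _ => ?_
  rw [dotProduct_smul, smul_eq_mul, mul_assoc]


/-- **Duan–Guo condition, necessity.**  If a probabilistic transformation takes
the unit vectors `ψ1 j` (spanning `ℂ^D`) to an orthonormal set `x j` with
probability vector `p` (unambiguous state discrimination), then
`Γ₁ - Δ(p)` is positive semidefinite. -/
theorem duan_guo_necessity {D N M : ℕ}
    (ψ1 x : Fin N → (Fin D → ℂ))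
    (hψ1unit : ∀ j, star (ψ1 j) ⬝ᵥ ψ1 j = 1)
    (hspan : Submodule.span ℂ (Set.range ψ1) = ⊤)
    (hortho : ∀ j' j, star (x j') ⬝ᵥ x j = if j' = j then 1 else 0)
    (Γ1 : Matrix (Fin N) (Fin N) ℂ)
    (hΓ1 : ∀ j' j, Γ1 j' j = star (ψ1 j') ⬝ᵥ ψ1 j)
    (p : Fin N → ℝ)
    (A : Fin M → Matrix (Fin D) (Fin D) ℂ)
    (c : Fin M → Fin N → ℂ)
    (hA : (1 - ∑ k, (A k)ᴴ * A k).PosSemidef)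
    (hAct : ∀ k j, (A k) *ᵥ ψ1 j = c k j • x j)
    (hp : ∀ j, (p j : ℂ) = star (ψ1 j) ⬝ᵥ ((∑ k, (A k)ᴴ * A k) *ᵥ ψ1 j)) :
    (Γ1 - Matrix.diagonal (fun j => (p j : ℂ))).PosSemidef := by
  have hcross : ∀ j' j, star (ψ1 j') ⬝ᵥ ((∑ k, (A k)ᴴ * A k) *ᵥ ψ1 j)
      = if j' = j then (p j : ℂ) else 0 := by
    intro j' j
    rw [quad_sum]
    have hval : ∀ k : Fin M, star (A k *ᵥ ψ1 j') ⬝ᵥ (A k *ᵥ ψ1 j)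
        = star (c k j') * c k j * (if j' = j then 1 else 0) := by
      intro k
      rw [hAct, hAct, star_smul, smul_dotProduct, dotProduct_smul,
        smul_eq_mul, smul_eq_mul, hortho, mul_assoc]
    simp only [hval]
    by_cases h : j' = j
    · subst h
      simp only [if_pos rfl, mul_one]
      rw [hp j', quad_sum]
      refine (Finset.sum_congr rfl fun k _ => ?_).symm
      rw [hAct, star_smul, smul_dotProduct, dotProduct_smul,
        smul_eq_mul, smul_eq_mul, hortho]
      simp
    · simp [h]
  refine Matrix.posSemidef_iff_dotProduct_mulVec.mpr ⟨?_, ?_⟩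
  · -- Hermitian
    apply Matrix.IsHermitian.sub
    · show Γ1ᴴ = Γ1
      ext i j
      rw [Matrix.conjTranspose_apply, hΓ1 j i, hΓ1 i j]
      exact (Matrix.star_dotProduct _ _).symm
    · exact Matrix.isHermitian_diagonal_of_self_adjoint _ (by
        ext j
        exact Complex.conj_ofReal (p j))
  · intro v
    set S : Matrix (Fin D) (Fin D) ℂ := ∑ k, (A k)ᴴ * A k with hSdef
    set u : Fin D → ℂ := ∑ j, v j • ψ1 j with hu
    have key1 : star v ⬝ᵥ (Γ1 *ᵥ v) = star u ⬝ᵥ u := by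
      have e := expand_bilin ψ1 v 1
      rw [Matrix.one_mulVec] at e
      simp only [Matrix.one_mulVec] at e
      rw [hu, e]
      have lhs : star v ⬝ᵥ (Γ1 *ᵥ v) = ∑ j', ∑ j, star (v j') * v j * Γ1 j' j := by
        simp only [dotProduct, Matrix.mulVec, Pi.star_apply, Finset.mul_sum]
        exact Finset.sum_congr rfl fun j' _ => Finset.sum_congr rfl fun j _ => by ring
      rw [lhs]
      exact Finset.sum_congr rfl fun j' _ => Finset.sum_congr rfl fun j _ => by rw [hΓ1]
    have key2 : star v ⬝ᵥ ((Matrix.diagonal fun j => (p j : ℂ)) *ᵥ v) = star u ⬝ᵥ (S *ᵥ u) := by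
      rw [hu, expand_bilin]
      simp only [hcross, mul_ite, mul_zero, Finset.sum_ite_eq, Finset.mem_univ, if_true]
      simp only [dotProduct, Matrix.mulVec_diagonal, Pi.star_apply]
      exact Finset.sum_congr rfl fun j _ => by ring
    have h0 := hA.dotProduct_mulVec_nonneg u
    rw [Matrix.sub_mulVec, Matrix.one_mulVec, dotProduct_sub] at h0
    rw [Matrix.sub_mulVec, dotProduct_sub, key1, key2]
    exact h0
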